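/- Let A be a real m × n matrix, b ∈ ℝ^m, and μ > 0. Suppose x̂ ∈ ℝⁿ satisfies A x̂ = b, |x̂_i| ≠ μ for all i = 1, …, n, and there exists ŷ ∈ ℝ^m such that (2/μ²)(𝟏 − H_μ(x̂)) ∘ x̂ + Aᵀ ŷ = 0. Then there exists ρ > 0 such that for every v ∈ ℝⁿ with A v = 0 and ‖v‖_∞ ≤ ρ, one has Φ_μ(x̂ + v) ≥ Φ_μ(x̂); in particular, x̂ is a local minimizer of Φ_μ over {x ∈ ℝⁿ : A x = b}. -/

import Mathlib

/-- Scalar truncated Huber function: φ_μ(t) = min(1, t²/μ²). -/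
noncomputable def phiTH (μ t : ℝ) : ℝ := min 1 (t ^ 2 / μ ^ 2)

/-- Truncated Huber penalty: Φ_μ(x) = Σ_i φ_μ(x_i). -/
noncomputable def PhiTH {n : ℕ} (μ : ℝ) (x : Fin n → ℝ) : ℝ := ∑ i, phiTH μ (x i)

/-- Filter operator H_μ: (H_μ(x))_i = 0 if |x_i| ≤ μ, and 1 if |x_i| > μ. -/
noncomputable def Hfilter {n : ℕ} (μ : ℝ) (x : Fin n → ℝ) : Fin n → ℝ :=
  fun i => if μ < |x i| then 1 else 0

/-- Note: the norm `‖v‖` on `Fin n → ℝ` is the sup norm `‖v‖_∞ = max_i |v_i|`. -/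
theorem stmt14 {m n : ℕ} (A : Matrix (Fin m) (Fin n) ℝ) (b : Fin m → ℝ)
    (μ : ℝ) (hμ : 0 < μ) (xh : Fin n → ℝ)
    (hfeas : A.mulVec xh = b) (hne : ∀ i, |xh i| ≠ μ)
    (hy : ∃ yh : Fin m → ℝ,
      (fun i => (2 / μ ^ 2) * (1 - Hfilter μ xh i) * xh i) + A.transpose.mulVec yh = 0) :
    ∃ ρ > 0, ∀ v : Fin n → ℝ, A.mulVec v = 0 → ‖v‖ ≤ ρ →
      PhiTH μ xh ≤ PhiTH μ (xh + v) := by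
  classical
  obtain ⟨yh, hyh⟩ := hy
  set s : Finset ℝ := insert 1 (Finset.image (fun i => |(|xh i| - μ)|) Finset.univ) with hs
  have hsne : s.Nonempty := ⟨1, Finset.mem_insert_self _ _⟩
  refine ⟨s.min' hsne, ?_, ?_⟩
  · apply (Finset.lt_min'_iff s hsne).2
    intro y hy
    rcases Finset.mem_insert.1 hy with rfl | hy
    · norm_num
    · obtain ⟨i, _, rfl⟩ := Finset.mem_image.1 hy
      exact abs_pos.2 (sub_ne_zero.2 (hne i))
  · intro v hv hvρ
    have hvi : ∀ i, |v i| ≤ |(|xh i| - μ)| := by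
      intro i
      refine le_trans (le_trans ?_ hvρ) (Finset.min'_le _ _ ?_)
      · exact norm_le_pi_norm v i
      · exact Finset.mem_insert_of_mem (Finset.mem_image_of_mem _ (Finset.mem_univ i))
    have hμ2 : (0:ℝ) < μ ^ 2 := by positivity
    -- the first-order term vanishes
    have hsum : ∑ i, (2 / μ ^ 2) * (1 - Hfilter μ xh i) * xh i * v i = 0 := by
      have h1 : ∀ i, (2 / μ ^ 2) * (1 - Hfilter μ xh i) * xh i
          = - (A.transpose.mulVec yh i) := by
        intro i
        have := congrFun hyh i
        simp only [Pi.add_apply, Pi.zero_apply] at this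
        linarith
      have h2 : ∑ i, (2 / μ ^ 2) * (1 - Hfilter μ xh i) * xh i * v i
          = - dotProduct (A.transpose.mulVec yh) v := by
        rw [dotProduct, ← Finset.sum_neg_distrib]
        exact Finset.sum_congr rfl fun i _ => by rw [h1 i]; ring
      rw [h2, Matrix.mulVec_transpose, ← Matrix.dotProduct_mulVec, hv,
        dotProduct_zero, neg_zero]
    -- termwise inequality
    have hterm : ∀ i, phiTH μ (xh i) + (2 / μ ^ 2) * (1 - Hfilter μ xh i) * xh i * v i
        ≤ phiTH μ (xh i + v i) := by
      intro i
      unfold phiTH Hfilter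
      by_cases hc : μ < |xh i|
      · have hρi : |v i| ≤ |xh i| - μ := by
          have h := hvi i
          have he : |(|xh i| - μ)| = |xh i| - μ := abs_of_pos (by linarith)
          linarith [he ▸ h]
        have h1 : (1:ℝ) ≤ (xh i) ^ 2 / μ ^ 2 := by
          rw [le_div_iff₀ hμ2, one_mul, ← sq_abs (xh i)]
          nlinarith [abs_nonneg (xh i)]
        have h2 : (1:ℝ) ≤ (xh i + v i) ^ 2 / μ ^ 2 := by
          rw [le_div_iff₀ hμ2, one_mul, ← sq_abs (xh i + v i)]
          have : μ ≤ |xh i + v i| := by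
            have := abs_sub_abs_le_abs_sub (xh i) (-(v i))
            simp only [abs_neg, sub_neg_eq_add] at this
            linarith
          nlinarith
        simp [hc, min_eq_left h1, min_eq_left h2]
      · push_neg at hc
        have hlt : |xh i| < μ := lt_of_le_of_ne hc (hne i)
        have hρi : |v i| ≤ μ - |xh i| := by
          have h := hvi i
          have he : |(|xh i| - μ)| = μ - |xh i| := by
            rw [abs_of_neg (show |xh i| - μ < 0 by linarith), neg_sub]
          linarith [he ▸ h]
        have h1 : (xh i) ^ 2 / μ ^ 2 ≤ 1 := by
          rw [div_le_one hμ2, ← sq_abs (xh i)]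
          nlinarith [abs_nonneg (xh i)]
        have habs : |xh i + v i| ≤ μ := by
          calc |xh i + v i| ≤ |xh i| + |v i| := abs_add_le _ _
            _ ≤ μ := by linarith
        have h2 : (xh i + v i) ^ 2 / μ ^ 2 ≤ 1 := by
          rw [div_le_one hμ2, ← sq_abs (xh i + v i)]
          nlinarith [abs_nonneg (xh i + v i)]
        simp only [hc.not_gt, if_false, min_eq_right h1, min_eq_right h2]
        have key : (xh i) ^ 2 + 2 * xh i * v i ≤ (xh i + v i) ^ 2 := by
          nlinarith [sq_nonneg (v i)]
        have heq : (xh i) ^ 2 / μ ^ 2 + 2 / μ ^ 2 * (1 - 0) * xh i * v i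
            = ((xh i) ^ 2 + 2 * xh i * v i) / μ ^ 2 := by
          field_simp
          ring
        rw [heq]
        exact (div_le_div_iff_of_pos_right hμ2).2 key
    calc PhiTH μ xh = PhiTH μ xh
        + ∑ i, (2 / μ ^ 2) * (1 - Hfilter μ xh i) * xh i * v i := by rw [hsum, add_zero]
      _ = ∑ i, (phiTH μ (xh i) + (2 / μ ^ 2) * (1 - Hfilter μ xh i) * xh i * v i) := by
          rw [PhiTH, ← Finset.sum_add_distrib]
      _ ≤ ∑ i, phiTH μ (xh i + v i) := Finset.sum_le_sum fun i _ => hterm i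
      _ = PhiTH μ (xh + v) := by simp [PhiTH]
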